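/- For every n ≥ 1, sup over x ∈ ℝ of |φ(x) · H_n(x)| ≤ 2^{n/2} · Γ((n+1)/2), where φ is the standard Gaussian density and H_n is the Hermite polynomial of degree n defined by φ^{(n)}(x) = (−1)^n H_n(x) φ(x). -/

import Mathlib

/-- The standard Gaussian density. -/
noncomputable def gaussPDF (x : ℝ) : ℝ := Real.exp (-x ^ 2 / 2) / Real.sqrt (2 * Real.pi)

/-- The (probabilists') Hermite polynomial of degree `n`, evaluated at `x`. -/
noncomputable def hermiteVal (n : ℕ) (x : ℝ) : ℝ := Polynomial.aeval x (Polynomial.hermite n)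

open MeasureTheory Real Complex FourierTransform
open scoped Real


lemma contDiff_gauss : ContDiff ℝ ⊤ (fun y : ℝ => Real.exp (-(y ^ 2 / 2))) :=
  Real.contDiff_exp.comp (((contDiff_id.pow 2).div_const 2).neg)

lemma iteratedDeriv_ofReal_gauss (n : ℕ) (x : ℝ) :
    iteratedDeriv n (fun y : ℝ => ((Real.exp (-(y ^ 2 / 2)) : ℝ) : ℂ)) x
      = ((iteratedDeriv n (fun y : ℝ => Real.exp (-(y ^ 2 / 2))) x : ℝ) : ℂ) := by
  have h := Complex.ofRealCLM.iteratedFDeriv_comp_left contDiff_gauss.contDiffAt (x := x) (i := n) le_top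
  rw [iteratedDeriv_eq_iteratedFDeriv, iteratedDeriv_eq_iteratedFDeriv]
  have h2 : (fun y : ℝ => ((Real.exp (-(y ^ 2 / 2)) : ℝ) : ℂ))
      = Complex.ofRealCLM ∘ (fun y : ℝ => Real.exp (-(y ^ 2 / 2))) := rfl
  rw [h2, h]
  rfl

noncomputable def cc : ℂ := (2 * (π:ℂ)) ^ (1/2 : ℂ)
noncomputable def gg : ℝ → ℂ := fun t => Complex.exp (-(π:ℂ) * (2 * (π:ℂ)) * t ^ 2)
noncomputable def ff : ℝ → ℂ := fun t => cc * gg t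

lemma cc_eq : cc = ((Real.sqrt (2 * π) : ℝ) : ℂ) := by
  rw [Real.sqrt_eq_rpow]
  rw [show cc = ((2 * π : ℝ) : ℂ) ^ (((1/2 : ℝ)) : ℂ) by unfold cc; push_cast; rfl]
  rw [← Complex.ofReal_cpow (by positivity)]

lemma cc_ne : cc ≠ 0 := by
  rw [cc_eq]
  simp only [ne_eq, Complex.ofReal_eq_zero]
  positivity

lemma fourier_ff : 𝓕 ff = fun t : ℝ => Complex.exp (-(t:ℂ) ^ 2 / 2) := by
  have hb : 0 < (2 * (π:ℂ)).re := by simp [Real.pi_pos]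
  have h := fourier_gaussian_pi hb
  have hsmul : 𝓕 ff = fun t => cc • 𝓕 gg t := by
    have : ff = cc • gg := rfl
    rw [this]
    exact funext fun t => congrFun (VectorFourier.fourierIntegral_const_smul _ _ _ _ _) t
  rw [hsmul]
  funext t
  rw [show (𝓕 gg) = _ from h]
  simp only [smul_eq_mul]
  rw [show (-(π:ℂ) / (2 * π) * t ^ 2) = -(t:ℂ)^2/2 by
    have : (π:ℂ) ≠ 0 := Complex.ofReal_ne_zero.mpr Real.pi_ne_zero
    field_simp]
  rw [← mul_assoc, mul_one_div]
  rw [show cc / (2 * (π:ℂ)) ^ (1/2 : ℂ) = 1 from div_self cc_ne, one_mul]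

lemma norm_gg (t : ℝ) : ‖gg t‖ = Real.exp (-(2 * π ^ 2) * t ^ 2) := by
  unfold gg
  rw [show (-(π:ℂ) * (2 * (π:ℂ)) * (t:ℂ) ^ 2) = ((-(2 * π ^ 2) * t ^ 2 : ℝ) : ℂ) by
    push_cast; ring]
  rw [Complex.norm_exp, Complex.ofReal_re]

lemma integrable_pow_gauss (k : ℕ) :
    Integrable (fun t : ℝ => |t| ^ k * Real.exp (-(2 * π ^ 2) * t ^ 2)) := by
  have h := (integrable_rpow_mul_exp_neg_mul_sq (b := 2 * π ^ 2) (by positivity)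
    (s := (k : ℝ)) (by linarith [Nat.cast_nonneg (α := ℝ) k])).abs
  apply h.congr
  filter_upwards with t
  rw [Real.rpow_natCast, abs_mul, abs_of_pos (Real.exp_pos _), _root_.abs_pow]

lemma integrable_pow_gg (k : ℕ) : Integrable (fun t : ℝ => t ^ k • gg t) := by
  apply (integrable_pow_gauss k).mono'
  · apply Continuous.aestronglyMeasurable
    unfold gg
    fun_prop
  · filter_upwards with t
    rw [norm_smul, norm_gg, Real.norm_eq_abs, _root_.abs_pow]

lemma integrable_pow_ff (k : ℕ) : Integrable (fun t : ℝ => t ^ k • ff t) := by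
  have : (fun t : ℝ => t ^ k • ff t) = fun t : ℝ => cc * (t ^ k • gg t) := by
    funext t; unfold ff; rw [mul_smul_comm]
  rw [this]
  exact (integrable_pow_gg k).const_mul cc

lemma deriv_formula (n : ℕ) :
    iteratedDeriv n (fun t : ℝ => Complex.exp (-(t:ℂ) ^ 2 / 2))
      = 𝓕 (fun t : ℝ => (-2 * (π:ℂ) * Complex.I * t) ^ n • ff t) := by
  rw [← fourier_ff]
  exact Real.iteratedDeriv_fourier (N := (n : ℕ∞)) (fun k _ => integrable_pow_ff k) le_rfl

lemma norm_bound (n : ℕ) (x : ℝ) :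
    ‖iteratedDeriv n (fun t : ℝ => Complex.exp (-(t:ℂ) ^ 2 / 2)) x‖
      ≤ Real.sqrt (2 * π) * ((2 * π) ^ n *
        ∫ t : ℝ, |t| ^ n * Real.exp (-(2 * π ^ 2) * t ^ 2)) := by
  rw [deriv_formula]
  refine le_trans (VectorFourier.norm_fourierIntegral_le_integral_norm _ _ _ _ _) (le_of_eq ?_)
  have hnorm : ∀ t : ℝ, ‖(-2 * (π:ℂ) * Complex.I * t) ^ n • ff t‖
      = Real.sqrt (2 * π) * ((2 * π) ^ n * (|t| ^ n * Real.exp (-(2 * π ^ 2) * t ^ 2))) := by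
    intro t
    rw [norm_smul, norm_pow]
    have h1 : ‖(-2 * (π:ℂ) * Complex.I * (t:ℂ))‖ = 2 * π * |t| := by
      simp [map_mul, abs_of_pos Real.pi_pos]
    have h2 : ‖ff t‖ = Real.sqrt (2 * π) * Real.exp (-(2 * π ^ 2) * t ^ 2) := by
      unfold ff
      rw [norm_mul, cc_eq, Complex.norm_real, Real.norm_eq_abs,
        _root_.abs_of_nonneg (Real.sqrt_nonneg _), norm_gg]
    rw [h1, h2, mul_pow, mul_pow]
    ring
  simp_rw [hnorm]
  rw [integral_const_mul, integral_const_mul]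

lemma J_eq (n : ℕ) : (∫ t : ℝ, |t| ^ n * Real.exp (-(2 * π ^ 2) * t ^ 2))
    = (2 * π ^ 2) ^ (-((n:ℝ) + 1) / 2) * Real.Gamma (((n:ℝ) + 1) / 2) := by
  have h1 : (∫ t : ℝ, |t| ^ n * Real.exp (-(2 * π ^ 2) * t ^ 2))
      = 2 * ∫ t in Set.Ioi (0:ℝ), t ^ n * Real.exp (-(2 * π ^ 2) * t ^ 2) := by
    rw [← integral_comp_abs (f := fun u => u ^ n * Real.exp (-(2 * π ^ 2) * u ^ 2))]
    congr 1; funext t; rw [_root_.sq_abs]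
  have h2 : (∫ t in Set.Ioi (0:ℝ), t ^ n * Real.exp (-(2 * π ^ 2) * t ^ 2))
      = ∫ t in Set.Ioi (0:ℝ), t ^ ((n:ℝ)) * Real.exp (-(2 * π ^ 2) * t ^ (((2:ℕ)):ℝ)) := by
    apply setIntegral_congr_fun measurableSet_Ioi
    intro t _
    simp only [Real.rpow_natCast]
  rw [h1, h2, _root_.integral_rpow_mul_exp_neg_mul_rpow (by norm_num)
    (by linarith [Nat.cast_nonneg (α := ℝ) n]) (by positivity)]
  push_cast
  ring

lemma const_le (n : ℕ) :
    (2 * π) ^ n * (2 * π ^ 2) ^ (-((n:ℝ) + 1) / 2) ≤ (2:ℝ) ^ ((n:ℝ) / 2) := by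
  have hπ := Real.pi_pos
  have key : (2 * π) ^ n * (2 * π ^ 2) ^ (-((n:ℝ) + 1) / 2)
      = (2:ℝ) ^ ((n:ℝ) / 2) * ((2:ℝ) ^ (-(1:ℝ) / 2) * π ^ (-(1:ℝ))) := by
    rw [← Real.rpow_natCast (2 * π) n, Real.mul_rpow (by norm_num) hπ.le,
      Real.mul_rpow (by norm_num) (sq_nonneg π),
      ← Real.rpow_natCast π 2, ← Real.rpow_mul hπ.le,
      mul_mul_mul_comm, ← Real.rpow_add two_pos, ← Real.rpow_add hπ,
      ← mul_assoc, ← Real.rpow_add two_pos]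
    congr 1
    · congr 1; ring
    · congr 1; ring
  rw [key]
  have h1 : (2:ℝ) ^ (-(1:ℝ) / 2) ≤ 1 :=
    Real.rpow_le_one_of_one_le_of_nonpos one_le_two (by norm_num)
  have h2 : π ^ (-(1:ℝ)) ≤ 1 :=
    Real.rpow_le_one_of_one_le_of_nonpos (by linarith [Real.pi_gt_three]) (by norm_num)
  have h3 : (0:ℝ) ≤ 2 ^ ((n:ℝ) / 2) := (Real.rpow_pos_of_pos two_pos _).le
  have h4 : (0:ℝ) ≤ π ^ (-(1:ℝ)) := (Real.rpow_pos_of_pos hπ _).le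
  calc (2:ℝ) ^ ((n:ℝ)/2) * (2 ^ (-(1:ℝ)/2) * π ^ (-(1:ℝ)))
      ≤ 2 ^ ((n:ℝ)/2) * 1 := by
        apply mul_le_mul_of_nonneg_left _ h3
        calc (2:ℝ) ^ (-(1:ℝ)/2) * π ^ (-(1:ℝ)) ≤ 1 * 1 :=
          mul_le_mul h1 h2 h4 zero_le_one
        _ = 1 := one_mul 1
    _ = 2 ^ ((n:ℝ)/2) := mul_one _

theorem abs_gauss_mul_hermite_le (n : ℕ) (hn : 1 ≤ n) (x : ℝ) :
    |gaussPDF x * hermiteVal n x| ≤ (2 : ℝ) ^ ((n : ℝ) / 2) * Real.Gamma (((n : ℝ) + 1) / 2) := by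
  have hπ := Real.pi_pos
  have hs : (0:ℝ) < Real.sqrt (2 * π) := Real.sqrt_pos.mpr (by positivity)
  set D : ℝ := iteratedDeriv n (fun y : ℝ => Real.exp (-(y ^ 2 / 2))) x with hDdef
  have hprod : gaussPDF x * hermiteVal n x = (-1:ℝ) ^ n * D / Real.sqrt (2 * π) := by
    unfold gaussPDF hermiteVal
    rw [hDdef, iteratedDeriv_eq_iterate, Polynomial.deriv_gaussian_eq_hermite_mul_gaussian,
      show Real.exp (-x ^ 2 / 2) = Real.exp (-(x ^ 2 / 2)) by ring_nf]
    have hsq : ((-1:ℝ) ^ n) * ((-1:ℝ) ^ n) = 1 := by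
      rw [← pow_add]; exact Even.neg_one_pow ⟨n, rfl⟩
    field_simp
    linear_combination (-((Polynomial.aeval x) (Polynomial.hermite n))) * hsq
  have habs : |gaussPDF x * hermiteVal n x| = |D| / Real.sqrt (2 * π) := by
    rw [hprod, abs_div, abs_mul, _root_.abs_pow, abs_neg, abs_one, one_pow, one_mul,
      _root_.abs_of_nonneg (Real.sqrt_nonneg _)]
  have hDc : ((D : ℝ) : ℂ) = iteratedDeriv n (fun t : ℝ => Complex.exp (-(t:ℂ) ^ 2 / 2)) x := by
    rw [hDdef, ← iteratedDeriv_ofReal_gauss]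
    congr 1
    funext y
    rw [Complex.ofReal_exp]
    congr 1
    push_cast
    ring
  have hDb : |D| ≤ Real.sqrt (2 * π) * ((2 * π) ^ n *
      ((2 * π ^ 2) ^ (-((n:ℝ) + 1) / 2) * Real.Gamma (((n:ℝ) + 1) / 2))) := by
    have hb := norm_bound n x
    rw [← hDc, Complex.norm_real, Real.norm_eq_abs, J_eq] at hb
    linarith [hb]
  have hΓ : (0:ℝ) ≤ Real.Gamma (((n:ℝ) + 1) / 2) :=
    (Real.Gamma_pos_of_pos (by positivity)).le
  rw [habs, div_le_iff₀ hs]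
  calc |D| ≤ Real.sqrt (2 * π) * ((2 * π) ^ n *
      ((2 * π ^ 2) ^ (-((n:ℝ) + 1) / 2) * Real.Gamma (((n:ℝ) + 1) / 2))) := hDb
    _ ≤ (2:ℝ) ^ ((n:ℝ) / 2) * Real.Gamma (((n:ℝ) + 1) / 2) * Real.sqrt (2 * π) := by
        rw [mul_comm (Real.sqrt (2 * π))]
        apply mul_le_mul_of_nonneg_right _ hs.le
        rw [← mul_assoc]
        exact mul_le_mul_of_nonneg_right (const_le n) hΓ
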